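/- arXiv:2502.03513 — 5 statements merged into one kernel-verified Lean document; each statement's English description precedes it below -/
import Mathlib

section
/- Assume Hypothesis H. Then there are infinitely many pairs of consecutive elements of A whose difference is not in A; that is, there are infinitely many indices n ≥ 2 such that a_n - a_{n-1} ∉ A (equivalently, j(a_n) > 1 infinitely often). -/
open Polynomial

/-- `inA m` : `m ≥ 1` and `m² + 1` is prime, i.e. `m` is an element of the set `A`. -/
def inA (m : ℕ) : Prop := 1 ≤ m ∧ Nat.Prime (m ^ 2 + 1)

/-- The increasing enumeration of `A` (0-indexed): `seqA 0 = a₁ < seqA 1 = a₂ < ⋯`. -/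
noncomputable def seqA (n : ℕ) : ℕ := Nat.nth inA n

/-- The Bunyakovsky condition for a finite family of integer polynomials:
no prime divides the product of their values at every integer. -/
def BunyakovskyCond (l : List (Polynomial ℤ)) : Prop :=
  ∀ p : ℕ, p.Prime → ∃ n : ℤ, ¬ (p : ℤ) ∣ (l.map fun f => f.eval n).prod

/-- Schinzel's Hypothesis H: a finite family of irreducible integer polynomials
with positive leading coefficients satisfying the Bunyakovsky condition is
simultaneously prime at infinitely many positive integers. -/
def HypothesisH : Prop :=
  ∀ l : List (Polynomial ℤ),
    (∀ f ∈ l, Irreducible f) →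
    (∀ f ∈ l, 0 < f.leadingCoeff) →
    BunyakovskyCond l →
    {n : ℕ | 0 < n ∧ ∀ f ∈ l, Prime (f.eval (n : ℤ))}.Infinite

instance : DecidablePred inA := fun m => by unfold inA; infer_instance

lemma irr_quad (a b : ℤ) (ha : a ≠ 0) (hco : IsCoprime (a^2) (b^2+1)) :
    Irreducible ((C a * X + C b)^2 + 1) := by
  have e : (C a * X + C b)^2 + 1 = C (a^2) * X^2 + C (2*a*b) * X + C (b^2+1) := by
    simp only [map_pow, map_mul, map_add, map_one, map_ofNat]; ring
  rw [e]
  have ha2 : (a^2 : ℤ) ≠ 0 := pow_ne_zero _ ha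
  have hprim : (C (a^2) * X^2 + C (2*a*b) * X + C (b^2+1)).IsPrimitive := by
    intro r hr
    rw [Polynomial.C_dvd_iff_dvd_coeff] at hr
    have h2 := hr 2
    have h0 := hr 0
    simp only [coeff_add, coeff_C_mul, coeff_X_pow, coeff_C, coeff_X] at h2 h0
    norm_num at h2 h0
    exact hco.isUnit_of_dvd' h2 h0
  rw [Polynomial.IsPrimitive.Int.irreducible_iff_irreducible_map_cast hprim]
  have e2 : (C (a^2) * X^2 + C (2*a*b) * X + C (b^2+1)).map (Int.castRingHom ℚ)
      = C ((a:ℚ)^2) * X^2 + C (2*(a:ℚ)*b) * X + C ((b:ℚ)^2+1) := by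
    simp only [Polynomial.map_add, Polynomial.map_mul, Polynomial.map_pow, Polynomial.map_C,
      Polynomial.map_X, Polynomial.map_one, Int.coe_castRingHom]
    push_cast
    ring
  rw [e2]
  have ha2' : ((a:ℚ)^2) ≠ 0 := pow_ne_zero _ (by exact_mod_cast ha)
  have hdeg : (C ((a:ℚ)^2) * X^2 + C (2*(a:ℚ)*b) * X + C ((b:ℚ)^2+1)).natDegree = 2 :=
    natDegree_quadratic ha2'
  rw [irreducible_iff_roots_eq_zero_of_degree_le_three (by omega) (by omega)]
  rw [Multiset.eq_zero_iff_forall_notMem]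
  intro x hx
  rw [mem_roots, IsRoot] at hx
  · have hx2 : ((a:ℚ)*x+b)^2 + 1 = 0 := by
      rw [← hx]; simp; ring
    nlinarith [sq_nonneg ((a:ℚ)*x+b)]
  · intro h
    rw [h] at hdeg
    simp at hdeg

/-- The two polynomials: `(2210 X + 66)² + 1` and `(2210 X + 74)² + 1`. -/
noncomputable def fP : Polynomial ℤ := (C 2210 * X + C 66)^2 + 1
noncomputable def gP : Polynomial ℤ := (C 2210 * X + C 74)^2 + 1

lemma fP_eval (n : ℤ) : fP.eval n = (2210*n+66)^2+1 := by simp [fP]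
lemma gP_eval (n : ℤ) : gP.eval n = (2210*n+74)^2+1 := by simp [gP]

lemma quad_leadingCoeff (b : ℤ) : ((C 2210 * X + C b)^2 + 1).leadingCoeff = 4884100 := by
  have e : (C (2210:ℤ) * X + C b)^2 + 1 = C 4884100 * X^2 + C (2*2210*b) * X + C (b^2+1) := by
    simp only [map_pow, map_mul, map_add, map_one, map_ofNat]; ring
  rw [e]
  exact leadingCoeff_quadratic (by norm_num)

/-- The key application of Hypothesis H. -/
lemma key (hH : HypothesisH) :
    {n : ℕ | 0 < n ∧ ∀ f ∈ [fP, gP], Prime (f.eval (n : ℤ))}.Infinite := by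
  apply hH
  · intro f hf
    simp only [List.mem_cons, List.mem_singleton] at hf
    rcases hf with rfl | rfl | h
    · exact irr_quad 2210 66 (by norm_num) (by rw [Int.isCoprime_iff_gcd_eq_one]; decide)
    · exact irr_quad 2210 74 (by norm_num) (by rw [Int.isCoprime_iff_gcd_eq_one]; decide)
    · exact absurd h List.not_mem_nil
  · intro f hf
    simp only [List.mem_cons, List.mem_singleton] at hf
    rcases hf with rfl | rfl | h
    · rw [fP, quad_leadingCoeff]; norm_num
    · rw [gP, quad_leadingCoeff]; norm_num
    · exact absurd h List.not_mem_nil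
  · intro p hp
    by_cases hdvd : p ∣ 2210
    · -- p ∈ {2, 5, 13, 17}: take n = 0
      refine ⟨0, ?_⟩
      have hp4 : p = 2 ∨ p = 5 ∨ p = 13 ∨ p = 17 := by
        have h2210 : (2210 : ℕ) = 2 * (5 * (13 * 17)) := by norm_num
        rw [h2210] at hdvd
        rcases (Nat.Prime.dvd_mul hp).mp hdvd with h | h
        · exact Or.inl ((Nat.prime_dvd_prime_iff_eq hp (by norm_num)).mp h)
        rcases (Nat.Prime.dvd_mul hp).mp h with h | h
        · exact Or.inr (Or.inl ((Nat.prime_dvd_prime_iff_eq hp (by norm_num)).mp h))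
        rcases (Nat.Prime.dvd_mul hp).mp h with h | h
        · exact Or.inr (Or.inr (Or.inl ((Nat.prime_dvd_prime_iff_eq hp (by norm_num)).mp h)))
        · exact Or.inr (Or.inr (Or.inr ((Nat.prime_dvd_prime_iff_eq hp (by norm_num)).mp h)))
      have heval : ([fP, gP].map fun f => f.eval (0:ℤ)).prod = 4357 * 5477 := by
        simp [fP_eval, gP_eval]
      rw [heval]
      rcases hp4 with rfl | rfl | rfl | rfl <;> decide
    · -- p ∤ 2210: choose n with 2210 n + 66 ≡ 0 mod p, product ≡ 65
      haveI : Fact p.Prime := ⟨hp⟩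
      have h2210 : ((2210 : ℤ) : ZMod p) ≠ 0 := by
        rw [Ne, ZMod.intCast_zmod_eq_zero_iff_dvd]
        exact_mod_cast fun h => hdvd (Int.ofNat_dvd.mp (by exact_mod_cast h))
      obtain ⟨n, hn⟩ := ZMod.intCast_surjective (-(66 : ZMod p) / (2210 : ZMod p))
      refine ⟨n, fun hd => ?_⟩
      have heval : (([fP,gP].map fun f => f.eval n).prod : ℤ)
          = ((2210*n+66)^2+1) * ((2210*n+74)^2+1) := by simp [fP_eval, gP_eval]
      rw [heval] at hd
      have h0 : ((((2210*n+66)^2+1) * ((2210*n+74)^2+1) : ℤ) : ZMod p) = 0 :=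
        (ZMod.intCast_zmod_eq_zero_iff_dvd _ p).mpr hd
      have hx : (2210 : ZMod p) * (n : ZMod p) + 66 = 0 := by
        have h2210' : (2210 : ZMod p) ≠ 0 := by exact_mod_cast h2210
        rw [hn, mul_comm, div_mul_cancel₀ _ h2210']
        ring
      have h65 : ((((2210*n+66)^2+1) * ((2210*n+74)^2+1) : ℤ) : ZMod p) = 65 := by
        push_cast
        linear_combination ((2210*(n:ZMod p)+66)^3 + 16*(2210*(n:ZMod p)+66)^2
          + 66*(2210*(n:ZMod p)+66) + 16) * hx
      rw [h65] at h0
      have hdvd65 : p ∣ 65 := by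
        have : (((65:ℕ):ℤ) : ZMod p) = 0 := by exact_mod_cast h0
        rw [ZMod.intCast_zmod_eq_zero_iff_dvd] at this
        exact_mod_cast this
      have hp65 : p = 5 ∨ p = 13 := by
        have h65' : (65 : ℕ) = 5 * 13 := by norm_num
        rw [h65'] at hdvd65
        rcases (Nat.Prime.dvd_mul hp).mp hdvd65 with h | h
        · exact Or.inl ((Nat.prime_dvd_prime_iff_eq hp (by norm_num)).mp h)
        · exact Or.inr ((Nat.prime_dvd_prime_iff_eq hp (by norm_num)).mp h)
      rcases hp65 with rfl | rfl
      · exact hdvd (by norm_num)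
      · exact hdvd (by norm_num)

lemma not_inA_of (k p : ℕ) (hp : p.Prime) (hdvd : p ∣ k^2+1) (hlt : p < k^2+1) : ¬ inA k := by
  rintro ⟨-, hpr⟩
  rcases hpr.eq_one_or_self_of_dvd p hdvd with h | h
  · exact hp.one_lt.ne' h
  · omega

lemma inA_of_prime_eval (n : ℕ) (b : ℕ) (hb : 0 < b)
    (hf : Prime (((C 2210 * X + C (b:ℤ))^2 + 1).eval (n:ℤ))) : inA (2210*n+b) := by
  constructor
  · omega
  · have he : ((C 2210 * X + C (b:ℤ))^2 + 1).eval (n:ℤ) = (((2210*n+b)^2+1 : ℕ) : ℤ) := by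
      simp only [eval_add, eval_pow, eval_mul, eval_C, eval_X, eval_one]
      push_cast
      ring
    rw [he] at hf
    exact Nat.prime_iff_prime_int.mpr hf

/-- Assuming Hypothesis H, there are infinitely many indices `n` such that the
difference of the consecutive elements `aₙ₊₁ - aₙ` of `A` is not in `A`
(i.e. `j(aₙ₊₁) > 1` infinitely often). -/
theorem stmt0 (hH : HypothesisH) :
    {n : ℕ | 1 ≤ n ∧ ¬ inA (seqA n - seqA (n - 1))}.Infinite := by
  have hS := key hH
  set S := {n : ℕ | 0 < n ∧ ∀ f ∈ [fP, gP], Prime (f.eval (n : ℤ))} with hSdef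
  -- basic facts for each n ∈ S
  have hfacts : ∀ n ∈ S, inA (2210*n+66) ∧ inA (2210*n+66+8) ∧
      Nat.count inA (2210*n+66+8) = Nat.count inA (2210*n+66) + 1 := by
    intro n hn
    obtain ⟨hn0, hprimes⟩ := hn
    have hf : Prime (fP.eval (n:ℤ)) := hprimes fP (by simp)
    have hg : Prime (gP.eval (n:ℤ)) := hprimes gP (by simp)
    have hm : inA (2210*n+66) := inA_of_prime_eval n 66 (by norm_num) (by exact_mod_cast hf)
    have hm8 : inA (2210*n+66+8) := by
      rw [show 2210*n+66+8 = 2210*n+74 by omega]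
      exact inA_of_prime_eval n 74 (by norm_num) (by exact_mod_cast hg)
    refine ⟨hm, hm8, ?_⟩
    -- the seven intermediate values are not in A
    have h1 : ¬ inA (2210*n+67) := not_inA_of _ 2 (by norm_num)
      ⟨2442050*n^2+148070*n+2245, by ring⟩ (by nlinarith)
    have h2 : ¬ inA (2210*n+68) := not_inA_of _ 5 (by norm_num)
      ⟨976820*n^2+60112*n+925, by ring⟩ (by nlinarith)
    have h3 : ¬ inA (2210*n+69) := not_inA_of _ 2 (by norm_num)
      ⟨2442050*n^2+152490*n+2381, by ring⟩ (by nlinarith)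
    have h4 : ¬ inA (2210*n+70) := not_inA_of _ 13 (by norm_num)
      ⟨375700*n^2+23800*n+377, by ring⟩ (by nlinarith)
    have h5 : ¬ inA (2210*n+71) := not_inA_of _ 2 (by norm_num)
      ⟨2442050*n^2+156910*n+2521, by ring⟩ (by nlinarith)
    have h6 : ¬ inA (2210*n+72) := not_inA_of _ 17 (by norm_num)
      ⟨287300*n^2+18720*n+305, by ring⟩ (by nlinarith)
    have h7 : ¬ inA (2210*n+73) := not_inA_of _ 2 (by norm_num)
      ⟨2442050*n^2+161330*n+2665, by ring⟩ (by nlinarith)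
    set m := 2210*n+66 with hmdef
    have e1 : Nat.count inA (m+1) = Nat.count inA m + 1 := by
      have h := Nat.count_succ inA m
      rw [if_pos hm] at h
      exact h
    have e2 : Nat.count inA (m+2) = Nat.count inA (m+1) := by
      have h := Nat.count_succ inA (m+1)
      rw [if_neg (show ¬ inA (m+1) from h1)] at h
      rw [show m+1+1 = m+2 by omega] at h
      omega
    have e3 : Nat.count inA (m+3) = Nat.count inA (m+2) := by
      have h := Nat.count_succ inA (m+2)
      rw [if_neg (show ¬ inA (m+2) from h2)] at h
      rw [show m+2+1 = m+3 by omega] at h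
      omega
    have e4 : Nat.count inA (m+4) = Nat.count inA (m+3) := by
      have h := Nat.count_succ inA (m+3)
      rw [if_neg (show ¬ inA (m+3) from h3)] at h
      rw [show m+3+1 = m+4 by omega] at h
      omega
    have e5 : Nat.count inA (m+5) = Nat.count inA (m+4) := by
      have h := Nat.count_succ inA (m+4)
      rw [if_neg (show ¬ inA (m+4) from h4)] at h
      rw [show m+4+1 = m+5 by omega] at h
      omega
    have e6 : Nat.count inA (m+6) = Nat.count inA (m+5) := by
      have h := Nat.count_succ inA (m+5)
      rw [if_neg (show ¬ inA (m+5) from h5)] at h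
      rw [show m+5+1 = m+6 by omega] at h
      omega
    have e7 : Nat.count inA (m+7) = Nat.count inA (m+6) := by
      have h := Nat.count_succ inA (m+6)
      rw [if_neg (show ¬ inA (m+6) from h6)] at h
      rw [show m+6+1 = m+7 by omega] at h
      omega
    have e8 : Nat.count inA (m+8) = Nat.count inA (m+7) := by
      have h := Nat.count_succ inA (m+7)
      rw [if_neg (show ¬ inA (m+7) from h7)] at h
      rw [show m+7+1 = m+8 by omega] at h
      omega
    omega
  -- the index map
  set φ : ℕ → ℕ := fun n => Nat.count inA (2210*n+66) + 1 with hφ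
  have hinj : Set.InjOn φ S := by
    have hmono : ∀ n ∈ S, ∀ n' ∈ S, n < n' → φ n < φ n' := by
      intro n hn n' hn' hlt
      have hm := (hfacts n hn).1
      have : Nat.count inA (2210*n+66) + 1 ≤ Nat.count inA (2210*n'+66) := by
        calc Nat.count inA (2210*n+66) + 1 = Nat.count inA (2210*n+66+1) := by
              have h := Nat.count_succ inA (2210*n+66)
              rw [if_pos hm] at h
              omega
          _ ≤ Nat.count inA (2210*n'+66) := Nat.count_monotone inA (by omega)
      simp only [hφ]
      omega
    intro n hn n' hn' heq
    rcases lt_trichotomy n n' with h | h | h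
    · exact absurd heq (hmono n hn n' hn' h).ne
    · exact h
    · exact absurd heq.symm (hmono n' hn' n hn h).ne
  have himg : φ '' S ⊆ {n : ℕ | 1 ≤ n ∧ ¬ inA (seqA n - seqA (n - 1))} := by
    rintro k ⟨n, hn, rfl⟩
    obtain ⟨hm, hm8, hcount⟩ := hfacts n hn
    have hs1 : seqA (φ n) = 2210*n+66+8 := by
      have : φ n = Nat.count inA (2210*n+66+8) := by simp only [hφ]; omega
      rw [this, seqA, Nat.nth_count hm8]
    have hs0 : seqA (φ n - 1) = 2210*n+66 := by
      have : φ n - 1 = Nat.count inA (2210*n+66) := by simp only [hφ]; omega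
      rw [this, seqA, Nat.nth_count hm]
    constructor
    · simp only [hφ]; omega
    · rw [hs1, hs0, show 2210*n+66+8 - (2210*n+66) = 8 by omega]
      intro h
      exact absurd h.2 (by decide)
  exact (hS.image hinj).mono himg
end

section
/- Let Y ⊆ ℕ be a set of natural density zero and let k be a positive integer. Then there exist k distinct nonnegative integers b_0, b_1, …, b_{k-1}, none of which belong to Y, such that the polynomials f_i(x) = (x - b_i)² + 1, for 0 ≤ i ≤ k-1, satisfy the Bunyakovsky condition: for every prime p there exists an integer x such that p does not divide the product ∏_{i=0}^{k-1} ((x - b_i)² + 1). -/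
open scoped Classical

/-- The set of multiples of `M` outside a density-zero set `Y` is infinite. -/
lemma aux_infinite (Y : Set ℕ)
    (hY : Filter.Tendsto
      (fun n : ℕ => (((Finset.Icc 1 n).filter (fun m => m ∈ Y)).card : ℝ) / n)
      Filter.atTop (nhds 0)) (M : ℕ) (hM : 0 < M) :
    {n : ℕ | M ∣ n ∧ n ∉ Y}.Infinite := by
  by_contra hfin
  rw [Set.not_infinite] at hfin
  obtain ⟨N, hN⟩ := hfin.bddAbove
  -- all multiples M*j with j ≥ N+1 are in Y
  have key : ∀ j : ℕ, N + 1 ≤ j → M * j ∈ Y := by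
    intro j hj
    by_contra hy
    have : M * j ∈ {n : ℕ | M ∣ n ∧ n ∉ Y} := ⟨⟨j, rfl⟩, hy⟩
    have := hN this
    have : N + 1 ≤ M * j := le_trans hj (Nat.le_mul_of_pos_left j hM)
    omega
  set N' := N + 1 with hN'
  -- eventually card/n < 1/(2M)
  have hev : ∀ᶠ n : ℕ in Filter.atTop,
      (((Finset.Icc 1 n).filter (fun m => m ∈ Y)).card : ℝ) / n < 1 / (2 * M) := by
    have := hY.eventually (eventually_lt_nhds (show (0:ℝ) < 1 / (2*M) by positivity))
    exact this
  obtain ⟨n0, hn0⟩ := Filter.eventually_atTop.mp hev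
  set n := n0 + 2 * M * (N' + 1) + 1 with hn
  have hnlt := hn0 n (by omega)
  -- lower bound on card
  have hinj : ∀ j ∈ Finset.Icc N' (n / M), M * j ∈ (Finset.Icc 1 n).filter (fun m => m ∈ Y) := by
    intro j hj
    rw [Finset.mem_Icc] at hj
    rw [Finset.mem_filter, Finset.mem_Icc]
    refine ⟨⟨by nlinarith [hj.1], ?_⟩, key j hj.1⟩
    calc M * j ≤ M * (n / M) := Nat.mul_le_mul_left M hj.2
    _ ≤ n := Nat.mul_div_le n M
  have hcard : (Finset.Icc N' (n / M)).card ≤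
      ((Finset.Icc 1 n).filter (fun m => m ∈ Y)).card := by
    apply Finset.card_le_card_of_injOn (fun j => M * j) hinj
    intro a _ b _ h
    exact Nat.eq_of_mul_eq_mul_left hM h
  have hdiv : N' ≤ n / M := by
    rw [Nat.le_div_iff_mul_le hM]
    nlinarith
  rw [Nat.card_Icc] at hcard
  have h3 : n ≤ M * (n / M) + M := by
    have h1 := Nat.div_add_mod n M
    have h2 := Nat.mod_lt n hM
    omega
  have h5 : n / M ≤ ((Finset.Icc 1 n).filter (fun m => m ∈ Y)).card + N' := by omega
  have h6 : n ≤ M * (((Finset.Icc 1 n).filter (fun m => m ∈ Y)).card + N') + M := by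
    calc n ≤ M * (n / M) + M := h3
    _ ≤ M * (((Finset.Icc 1 n).filter (fun m => m ∈ Y)).card + N') + M :=
      Nat.add_le_add_right (Nat.mul_le_mul_left M h5) M
  have h7 : (n : ℝ) ≤ M * (((Finset.Icc 1 n).filter (fun m => m ∈ Y)).card + N') + M := by
    exact_mod_cast h6
  have hM' : (0:ℝ) < M := by exact_mod_cast hM
  have hnpos : (0:ℝ) < n := by
    have : 0 < n := by omega
    exact_mod_cast this
  rw [div_lt_div_iff₀ hnpos (by positivity)] at hnlt
  have hnbig : 2 * (M:ℝ) * (N' + 1) < n := by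
    have : 2 * M * (N' + 1) < n := by omega
    exact_mod_cast this
  have hcard0 : (0:ℝ) ≤ (((Finset.Icc 1 n).filter (fun m => m ∈ Y)).card : ℝ) := by positivity
  nlinarith [mul_le_mul_of_nonneg_left h7 (by norm_num : (0:ℝ) ≤ 2)]

/-- If `Y ⊆ ℕ` has natural density zero and `k ≥ 1`, then there are `k` distinct
nonnegative integers `b₀, …, b_{k-1}`, none in `Y`, such that the polynomials
`fᵢ(x) = (x - bᵢ)² + 1` satisfy the Bunyakovsky condition. -/
theorem stmt4 (Y : Set ℕ)
    (hY : Filter.Tendsto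
      (fun n : ℕ => (((Finset.Icc 1 n).filter (fun m => m ∈ Y)).card : ℝ) / n)
      Filter.atTop (nhds 0))
    (k : ℕ) (hk : 1 ≤ k) :
    ∃ b : Fin k → ℕ, Function.Injective b ∧ (∀ i, b i ∉ Y) ∧
      ∀ p : ℕ, p.Prime → ∃ x : ℤ, ¬ (p : ℤ) ∣ ∏ i : Fin k, ((x - (b i : ℤ)) ^ 2 + 1) := by
  set M := (2 * k).factorial with hM
  have hMpos : 0 < M := Nat.factorial_pos _
  have hS := aux_infinite Y hY M hMpos
  let emb := hS.natEmbedding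
  refine ⟨fun i => (emb i).1, ?_, ?_, ?_⟩
  · intro i j hij
    exact Fin.val_injective (emb.injective (Subtype.ext hij))
  · intro i; exact (emb i).2.2
  · intro p hp
    haveI : Fact p.Prime := ⟨hp⟩
    by_cases hple : p ≤ 2 * k
    · -- small prime: use x = 0, all b i divisible by p
      refine ⟨0, fun hdvd => ?_⟩
      rw [← ZMod.intCast_zmod_eq_zero_iff_dvd] at hdvd
      push_cast at hdvd
      have : ∀ i : Fin k, ((0 : ZMod p) - ((emb i).1 : ZMod p)) ^ 2 + 1 = 1 := by
        intro i
        have hdvd' : p ∣ (emb i).1 := dvd_trans (Nat.dvd_factorial hp.pos hple) (emb i).2.1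
        rw [(ZMod.natCast_eq_zero_iff _ _).mpr hdvd']
        ring
      rw [Finset.prod_congr rfl (fun i _ => this i)] at hdvd
      simp at hdvd
    · -- large prime
      push_neg at hple
      by_contra hall
      push_neg at hall
      -- in ZMod p, for every z, product is zero
      have hz : ∀ z : ZMod p, ∏ i : Fin k, ((z - ((emb i).1 : ZMod p)) ^ 2 + 1) = 0 := by
        intro z
        have := hall (z.val : ℤ)
        rw [← ZMod.intCast_zmod_eq_zero_iff_dvd] at this
        push_cast at this
        rwa [ZMod.natCast_val, ZMod.cast_id] at this
      -- pick for each z a witness i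
      have hex : ∀ z : ZMod p, ∃ i : Fin k, (z - ((emb i).1 : ZMod p)) ^ 2 + 1 = 0 := by
        intro z
        have := hz z
        rw [Finset.prod_eq_zero_iff] at this
        obtain ⟨i, _, hi⟩ := this
        exact ⟨i, hi⟩
      choose f hf using hex
      have hcardZ : Fintype.card (ZMod p) = p := ZMod.card p
      have hpigeon : Fintype.card (Fin k) * 2 < Fintype.card (ZMod p) := by
        rw [hcardZ, Fintype.card_fin]; omega
      obtain ⟨i, hi⟩ := Fintype.exists_lt_card_fiber_of_mul_lt_card f hpigeon
      rw [Finset.two_lt_card] at hi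
      obtain ⟨x, hx, y, hy, z, hzm, hxy, hxz, hyz⟩ := hi
      simp only [Finset.mem_filter, Finset.mem_univ, true_and] at hx hy hzm
      set c : ZMod p := ((emb i).1 : ZMod p)
      have hx' : (x - c) ^ 2 = -1 := by have := hf x; rw [hx] at this; linear_combination this
      have hy' : (y - c) ^ 2 = -1 := by have := hf y; rw [hy] at this; linear_combination this
      have hz' : (z - c) ^ 2 = -1 := by have := hf z; rw [hzm] at this; linear_combination this
      have sqeq : ∀ a b : ZMod p, a ^ 2 = b ^ 2 → a = b ∨ a = -b := by
        intro a b h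
        have : (a - b) * (a + b) = 0 := by linear_combination h
        rcases mul_eq_zero.mp this with h' | h'
        · left; linear_combination h'
        · right; linear_combination h'
      have h1 := sqeq _ _ (hx'.trans hy'.symm)
      have h2 := sqeq _ _ (hx'.trans hz'.symm)
      have h3 := sqeq _ _ (hy'.trans hz'.symm)
      rcases h1 with h1 | h1
      · exact hxy (by linear_combination h1)
      rcases h2 with h2 | h2
      · exact hxz (by linear_combination h2)
      rcases h3 with h3 | h3
      · exact hyz (by linear_combination h3)
      · exact hyz (by linear_combination h1 - h2)
end

section
/- Assume Hypothesis H. Then liminf_{n→∞} j(a_n) = 1; that is, there are infinitely many indices n ≥ 2 such that a_n - a_{n-1} ∈ A (equivalently, j(a_n) = 1 for infinitely many n). -/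
instance inst_s7 : DecidablePred inA := fun m => by unfold inA; infer_instance

open Polynomial in
noncomputable def polyF : ℤ[X] := X ^ 2 + 1

open Polynomial in
noncomputable def polyG : ℤ[X] := X ^ 2 + C 4 * X + C 5

open Polynomial

lemma polyF_monic : polyF.Monic := by
  simpa [polyF] using monic_X_pow_add_C (a := (1:ℤ)) (n := 2) two_ne_zero

lemma polyG_monic : polyG.Monic := by
  unfold polyG
  rw [add_assoc]
  apply monic_X_pow_add (n := 2)
  apply lt_of_le_of_lt (degree_add_le _ _)
  apply max_lt
  · exact lt_of_le_of_lt (degree_C_mul_X_le _) (by norm_num)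
  · exact lt_of_le_of_lt degree_C_le (by norm_num)

lemma polyF_eval (n : ℤ) : polyF.eval n = n ^ 2 + 1 := by simp [polyF]

lemma polyG_eval (n : ℤ) : polyG.eval n = (n + 2) ^ 2 + 1 := by simp [polyG]; ring

lemma polyF_natDegree : polyF.natDegree = 2 := by
  unfold polyF; compute_degree!

lemma polyG_natDegree : polyG.natDegree = 2 := by
  unfold polyG; compute_degree!

lemma polyF_irr : Irreducible polyF := by
  rw [polyF_monic.irreducible_iff_roots_eq_zero_of_degree_le_three (by rw [polyF_natDegree])
    (by rw [polyF_natDegree]; norm_num)]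
  rw [Multiset.eq_zero_iff_forall_notMem]
  intro a ha
  rw [mem_roots polyF_monic.ne_zero] at ha
  rw [IsRoot, polyF_eval] at ha
  nlinarith [sq_nonneg a]

lemma polyG_irr : Irreducible polyG := by
  rw [polyG_monic.irreducible_iff_roots_eq_zero_of_degree_le_three (by rw [polyG_natDegree])
    (by rw [polyG_natDegree]; norm_num)]
  rw [Multiset.eq_zero_iff_forall_notMem]
  intro a ha
  rw [mem_roots polyG_monic.ne_zero] at ha
  rw [IsRoot, polyG_eval] at ha
  nlinarith [sq_nonneg (a + 2)]

lemma not_prime_of_even {m : ℕ} (h2 : 2 ∣ m) (h4 : 4 ≤ m) : ¬ Nat.Prime m := by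
  intro hp
  rcases (hp.eq_one_or_self_of_dvd 2 h2) with h | h <;> omega

/-- Assuming Hypothesis H, `liminf j(aₙ) = 1`: there are infinitely many indices `n`
such that the difference of consecutive elements `aₙ₊₁ - aₙ` of `A` lies in `A`
(i.e. `j(aₙ₊₁) = 1` infinitely often). -/
theorem stmt7 (hH : HypothesisH) :
    {n : ℕ | 1 ≤ n ∧ inA (seqA n - seqA (n - 1))}.Infinite := by
  have key := hH [polyF, polyG]
    (by intro f hf; simp only [List.mem_cons, List.not_mem_nil, or_false] at hf
        rcases hf with rfl | rfl; exacts [polyF_irr, polyG_irr])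
    (by intro f hf; simp only [List.mem_cons, List.not_mem_nil, or_false] at hf
        rcases hf with rfl | rfl <;>
          simp [polyF_monic.leadingCoeff, polyG_monic.leadingCoeff])
    (by
      intro p hp
      by_cases h5 : p = 5
      · refine ⟨4, ?_⟩
        subst h5
        simp [polyF_eval, polyG_eval]
      · refine ⟨0, ?_⟩
        simp [polyF_eval, polyG_eval]
        intro hd
        have : p ∣ 5 := by exact_mod_cast hd
        rcases (Nat.Prime.eq_one_or_self_of_dvd (by norm_num) p this) with h | h
        · exact hp.one_lt.ne' h
        · exact h5 h)
  set S := {n : ℕ | 0 < n ∧ ∀ f ∈ [polyF, polyG], Prime (f.eval (n : ℤ))} with hS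
  -- facts about elements of S
  have hmem : ∀ n ∈ S, inA n ∧ inA (n + 2) ∧ ¬ inA (n + 1) := by
    intro n hn
    obtain ⟨hn0, hprime⟩ := hn
    have h1 : Prime ((n : ℤ) ^ 2 + 1) := by
      have := hprime polyF (by simp); rwa [polyF_eval] at this
    have h2 : Prime (((n : ℤ) + 2) ^ 2 + 1) := by
      have := hprime polyG (by simp); rwa [polyG_eval] at this
    have h1' : Nat.Prime (n ^ 2 + 1) := by
      rw [Nat.prime_iff_prime_int]
      convert h1 using 1
      norm_num
    have h2' : Nat.Prime ((n + 2) ^ 2 + 1) := by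
      rw [Nat.prime_iff_prime_int]
      convert h2 using 1
      norm_num
    have hA1 : inA n := ⟨hn0, h1'⟩
    have hA2 : inA (n + 2) := ⟨by omega, h2'⟩
    -- n is even
    have hne1 : n ≠ 1 := by
      rintro rfl
      exact not_prime_of_even (by norm_num) (by norm_num) h2'
    have heven : 2 ∣ n := by
      rcases Nat.even_or_odd n with h | h
      · exact h.two_dvd
      · exfalso
        have hn3 : 3 ≤ n := by
          rcases h with ⟨k, rfl⟩; omega
        apply not_prime_of_even (m := n ^ 2 + 1) ?_ (by nlinarith) h1'
        rcases h with ⟨k, rfl⟩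
        refine ⟨2 * k ^ 2 + 2 * k + 1, by ring⟩
    refine ⟨hA1, hA2, ?_⟩
    rintro ⟨-, hp⟩
    apply not_prime_of_even ?_ ?_ hp
    · rcases heven with ⟨k, rfl⟩
      refine ⟨2 * k ^ 2 + 2 * k + 1, by ring⟩
    · have : 2 ≤ n := by omega
      nlinarith
  -- the map n ↦ count inA n + 1
  have hcount : ∀ n ∈ S, Nat.count inA (n + 2) = Nat.count inA n + 1 := by
    intro n hn
    obtain ⟨h1, h2, h3⟩ := hmem n hn
    rw [show n + 2 = (n + 1) + 1 from rfl, Nat.count_succ, if_neg h3, Nat.count_succ, if_pos h1]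
  have hnth1 : ∀ n ∈ S, Nat.nth inA (Nat.count inA n) = n := fun n hn =>
    Nat.nth_count (hmem n hn).1
  have hnth2 : ∀ n ∈ S, Nat.nth inA (Nat.count inA n + 1) = n + 2 := by
    intro n hn
    rw [← hcount n hn]
    exact Nat.nth_count (hmem n hn).2.1
  have hinj : Set.InjOn (fun n => Nat.count inA n + 1) S := by
    intro a ha b hb hab
    have hab' : Nat.count inA a + 1 = Nat.count inA b + 1 := hab
    have e1 := hnth2 a ha
    have e2 := hnth2 b hb
    rw [hab'] at e1
    omega
  apply Set.Infinite.mono ?_ (Set.Infinite.image hinj key)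
  rintro k ⟨n, hn, rfl⟩
  show 1 ≤ Nat.count inA n + 1 ∧
    inA (seqA (Nat.count inA n + 1) - seqA (Nat.count inA n + 1 - 1))
  refine ⟨by omega, ?_⟩
  simp only [seqA, Nat.add_sub_cancel]
  rw [hnth1 n hn, hnth2 n hn]
  exact ⟨by omega, by norm_num⟩
end

section
/- Assume Hypothesis H. Then Goldbach's other other conjecture holds infinitely often: there are infinitely many elements m of A that can be written as m = b + c with b, c ∈ A. -/
open Polynomial

/-- The polynomial `(2X + 2s)² + 1`, expanded. -/
noncomputable def gpoly (s : ℤ) : ℤ[X] := C 4 * X ^ 2 + C (8 * s) * X + C (4 * s ^ 2 + 1)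

lemma gpoly_eval (s n : ℤ) : (gpoly s).eval n = (2 * n + 2 * s) ^ 2 + 1 := by
  simp [gpoly]; ring

lemma gpoly_natDegree (s : ℤ) : (gpoly s).natDegree = 2 := by
  unfold gpoly; compute_degree!

lemma gpoly_coeff (s : ℤ) (k : ℕ) :
    (gpoly s).coeff k = if k = 2 then 4 else if k = 1 then 8 * s else
      if k = 0 then 4 * s ^ 2 + 1 else 0 := by
  unfold gpoly
  simp only [coeff_add, coeff_C_mul, coeff_X_pow, coeff_X, coeff_C]
  rcases k with _ | _ | _ | k <;> norm_num

lemma gpoly_leadingCoeff (s : ℤ) : (gpoly s).leadingCoeff = 4 := by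
  rw [leadingCoeff, gpoly_natDegree, gpoly_coeff]; norm_num

lemma gpoly_primitive (s : ℤ) : (gpoly s).IsPrimitive := by
  intro r hr
  have h0 : r ∣ (gpoly s).coeff 0 := (C_dvd_iff_dvd_coeff r _).mp hr 0
  have h2 : r ∣ (gpoly s).coeff 2 := (C_dvd_iff_dvd_coeff r _).mp hr 2
  rw [gpoly_coeff] at h0 h2
  norm_num at h0 h2
  refine isUnit_of_dvd_one ?_
  have h := dvd_sub h0 (h2.mul_left (s ^ 2))
  rwa [show 4 * s ^ 2 + 1 - s ^ 2 * 4 = 1 by ring] at h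

lemma gpoly_irreducible (s : ℤ) : Irreducible (gpoly s) := by
  rw [IsPrimitive.Int.irreducible_iff_irreducible_map_cast (gpoly_primitive s)]
  have hdeg : ((gpoly s).map (Int.castRingHom ℚ)).natDegree = 2 := by
    rw [natDegree_map_eq_of_injective (f := Int.castRingHom ℚ) (fun x y => by simp),
      gpoly_natDegree]
  rw [irreducible_iff_roots_eq_zero_of_degree_le_three (by omega) (by omega)]
  rw [Multiset.eq_zero_iff_forall_notMem]
  intro x hx
  have hne : ((gpoly s).map (Int.castRingHom ℚ)) ≠ 0 := by
    intro h; rw [h] at hdeg; simp at hdeg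
  rw [mem_roots hne] at hx
  rw [IsRoot.def, eval_map, gpoly] at hx
  simp only [eval₂_add, eval₂_mul, eval₂_X, eval₂_X_pow, eval₂_C] at hx
  simp only [eq_intCast] at hx
  push_cast at hx
  nlinarith [sq_nonneg (2 * x + 2 * (s : ℚ))]

lemma nat_prime_of_int (k : ℕ) (h : Prime (k : ℤ)) : Nat.Prime k :=
  Nat.prime_iff_prime_int.mpr h

/-- Assuming Hypothesis H, Goldbach's other other conjecture holds infinitely often:
there are infinitely many `m ∈ A` expressible as `m = b + c` with `b, c ∈ A`. -/
theorem stmt11 (hH : HypothesisH) :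
    {m : ℕ | inA m ∧ ∃ b c : ℕ, inA b ∧ inA c ∧ m = b + c}.Infinite := by
  have hbun : BunyakovskyCond [gpoly 0, gpoly 1] := by
    intro p hp
    by_cases h5 : p = 5
    · refine ⟨2, ?_⟩
      subst h5
      simp only [List.map_cons, List.map_nil, List.prod_cons, List.prod_nil, gpoly_eval]
      norm_num
    · refine ⟨0, ?_⟩
      simp only [List.map_cons, List.map_nil, List.prod_cons, List.prod_nil, gpoly_eval]
      norm_num
      intro hdvd
      have : (p : ℤ) ∣ ((5 : ℕ) : ℤ) := by exact_mod_cast hdvd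
      have h' : p ∣ 5 := Int.ofNat_dvd.mp this
      exact h5 ((Nat.prime_dvd_prime_iff_eq hp (by norm_num)).mp h')
  have hirr : ∀ f ∈ [gpoly 0, gpoly 1], Irreducible f := by
    intro f hf
    rcases List.mem_cons.mp hf with rfl | hf
    · exact gpoly_irreducible 0
    · rcases List.mem_cons.mp hf with rfl | hf
      · exact gpoly_irreducible 1
      · simp at hf
  have hlc : ∀ f ∈ [gpoly 0, gpoly 1], 0 < f.leadingCoeff := by
    intro f hf
    rcases List.mem_cons.mp hf with rfl | hf
    · rw [gpoly_leadingCoeff]; norm_num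
    · rcases List.mem_cons.mp hf with rfl | hf
      · rw [gpoly_leadingCoeff]; norm_num
      · simp at hf
  have hinf := hH [gpoly 0, gpoly 1] hirr hlc hbun
  have himg := hinf.image (f := fun n => 2 * n + 2)
    (fun a _ b _ h => by simp only at h; omega)
  refine himg.mono ?_
  rintro m ⟨n, ⟨hn0, hn⟩, rfl⟩
  show inA (2 * n + 2) ∧ ∃ b c : ℕ, inA b ∧ inA c ∧ 2 * n + 2 = b + c
  have h0 : Prime ((gpoly 0).eval (n : ℤ)) := hn _ (by simp)
  have h1 : Prime ((gpoly 1).eval (n : ℤ)) := hn _ (by simp)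
  rw [gpoly_eval] at h0 h1
  have hb : Nat.Prime ((2 * n) ^ 2 + 1) := by
    apply nat_prime_of_int
    push_cast
    convert h0 using 2
    ring
  have hm : Nat.Prime ((2 * n + 2) ^ 2 + 1) := by
    apply nat_prime_of_int
    push_cast
    convert h1 using 2
    ring
  refine ⟨⟨by omega, hm⟩, 2 * n, 2, ⟨by omega, hb⟩, ⟨by norm_num, by norm_num⟩, by ring⟩
end

section
/- Assume Hypothesis H. Then there are infinitely many integers y ≥ 1 such that 65y+1 and 65y+9 are consecutive elements of A whose difference, 8, is not an element of A. -/
open Polynomial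

/-- The polynomial `(130 X + b)² + 1`, written in quadratic normal form. -/
noncomputable def fpoly (b : ℤ) : ℤ[X] := C 16900 * X^2 + C (260*b) * X + C (b^2+1)

lemma fpoly_eval (b n : ℤ) : (fpoly b).eval n = (130*n+b)^2+1 := by
  simp only [fpoly, eval_add, eval_mul, eval_pow, eval_C, eval_X]; ring

lemma fpoly_leadingCoeff (b : ℤ) : (fpoly b).leadingCoeff = 16900 :=
  leadingCoeff_quadratic (by norm_num)

lemma fpoly_coeff0 (b : ℤ) : (fpoly b).coeff 0 = b^2+1 := by
  simp only [fpoly, coeff_add, coeff_C_mul, coeff_X_pow, coeff_C]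
  norm_num

lemma fpoly_coeff2 (b : ℤ) : (fpoly b).coeff 2 = 16900 := by
  simp only [fpoly, coeff_add, coeff_C_mul, coeff_X_pow, coeff_C, coeff_X]
  norm_num

lemma fpoly_irr (b : ℤ) (hprim : ∀ r : ℤ, r ∣ 16900 → r ∣ b^2+1 → IsUnit r) :
    Irreducible (fpoly b) := by
  have prim : (fpoly b).IsPrimitive := by
    intro r hr
    rw [C_dvd_iff_dvd_coeff] at hr
    exact hprim r (by have := hr 2; rwa [fpoly_coeff2] at this)
      (by have := hr 0; rwa [fpoly_coeff0] at this)
  rw [Polynomial.IsPrimitive.Int.irreducible_iff_irreducible_map_cast prim]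
  have hmap : (fpoly b).map (Int.castRingHom ℚ) =
      C 16900 * X^2 + C ((260:ℚ)*b) * X + C ((b:ℚ)^2+1) := by
    simp only [fpoly, Polynomial.map_add, Polynomial.map_mul, Polynomial.map_pow,
      map_C, map_X, Int.coe_castRingHom]
    push_cast
    ring_nf
  rw [hmap]
  have hdeg : (C (16900:ℚ) * X^2 + C ((260:ℚ)*b) * X + C ((b:ℚ)^2+1)).natDegree = 2 :=
    natDegree_quadratic (by norm_num)
  rw [Polynomial.irreducible_iff_roots_eq_zero_of_degree_le_three (by omega) (by omega)]
  rw [Multiset.eq_zero_iff_forall_notMem]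
  intro x hx
  have hne : (C (16900:ℚ) * X^2 + C ((260:ℚ)*b) * X + C ((b:ℚ)^2+1)) ≠ 0 := by
    intro h; rw [h] at hdeg; simp at hdeg
  rw [mem_roots hne] at hx
  have h0 : (16900:ℚ)*x^2 + 260*b*x + ((b:ℚ)^2+1) = 0 := by
    have := hx
    simp only [IsRoot, eval_add, eval_mul, eval_pow, eval_C, eval_X] at this
    linarith
  nlinarith [sq_nonneg ((130:ℚ)*x + b)]

lemma buny (p : ℕ) (hp : p.Prime) :
    ∃ n : ℤ, ¬ (p:ℤ) ∣ ((130*n+66)^2+1) * ((130*n+74)^2+1) := by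
  by_cases h130 : p ∣ 130
  · refine ⟨0, ?_⟩
    have hle : p ≤ 130 := Nat.le_of_dvd (by norm_num) h130
    have h2 : 2 ≤ p := hp.two_le
    have hp13 : p = 2 ∨ p = 5 ∨ p = 13 := by
      interval_cases p <;> revert h130 hp <;> decide
    norm_num
    rcases hp13 with rfl | rfl | rfl <;> decide
  · haveI : Fact p.Prime := ⟨hp⟩
    set u : ZMod p := (-66) * (130 : ZMod p)⁻¹ with hu
    have h130' : (130 : ZMod p) ≠ 0 := by
      intro h
      have : ((130:ℕ) : ZMod p) = 0 := by norm_cast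
      rw [ZMod.natCast_eq_zero_iff] at this
      exact h130 this
    refine ⟨(u.val : ℤ), ?_⟩
    rw [← ZMod.intCast_zmod_eq_zero_iff_dvd]
    have hn : ((u.val : ℕ) : ZMod p) = u := by
      rw [ZMod.natCast_val, ZMod.cast_id]
    push_cast
    rw [hn]
    have key : (130 : ZMod p) * u + 66 = 0 := by
      rw [hu]; field_simp; ring
    have k2 : (130 : ZMod p) * u + 74 = 8 := by
      have h : (130 : ZMod p) * u + 74 = ((130:ZMod p)*u+66) + 8 := by ring
      rw [h, key]; ring
    rw [key, k2]
    have h65 : ((65:ℕ) : ZMod p) ≠ 0 := by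
      rw [Ne, ZMod.natCast_eq_zero_iff]
      intro h; exact h130 (h.trans (by norm_num))
    norm_num
    simpa using h65

lemma prim_aux (b : ℤ) (g : ℕ) (hg : Int.gcd 16900 (b^2+1) = g) (hg1 : g = 1) :
    ∀ r : ℤ, r ∣ 16900 → r ∣ b^2+1 → IsUnit r := by
  intro r h1 h2
  have hd : r ∣ ((Int.gcd 16900 (b^2+1) : ℕ) : ℤ) := Int.dvd_coe_gcd h1 h2
  rw [hg, hg1] at hd
  exact isUnit_of_dvd_one (by exact_mod_cast hd)

lemma comp_aux {m d k : ℕ} (hd : d ≠ 1) (hk : k ≠ 1) (h : m ^ 2 + 1 = d * k) :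
    ¬ inA m := fun ⟨_, hp⟩ => (by rw [h] at hp; exact Nat.not_prime_mul hd hk hp)

/-- Assuming Hypothesis H, there are infinitely many `y ≥ 1` such that `65y+1` and
`65y+9` are consecutive elements of `A` (both lie in `A` and no element of `A` lies
strictly between them) whose difference, `8`, is not an element of `A`. -/
theorem stmt13 (hH : HypothesisH) :
    {y : ℕ | 1 ≤ y ∧ inA (65 * y + 1) ∧ inA (65 * y + 9) ∧
      (∀ m : ℕ, 65 * y + 1 < m → m < 65 * y + 9 → ¬ inA m) ∧
      (65 * y + 9) - (65 * y + 1) = 8 ∧ ¬ inA 8}.Infinite := by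
  have h1 : Irreducible (fpoly 66) := fpoly_irr 66 (prim_aux 66 1 (by norm_num [Int.gcd]) rfl)
  have h2 : Irreducible (fpoly 74) := fpoly_irr 74 (prim_aux 74 1 (by norm_num [Int.gcd]) rfl)
  have hS := hH [fpoly 66, fpoly 74]
    (by intro f hf; rcases List.mem_pair.mp hf with rfl | rfl; exacts [h1, h2])
    (by intro f hf
        rcases List.mem_pair.mp hf with rfl | rfl <;>
          rw [fpoly_leadingCoeff] <;> norm_num)
    (by intro p pp
        obtain ⟨n, hn⟩ := buny p pp
        exact ⟨n, by simpa [fpoly_eval] using hn⟩)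
  have himg : ((fun n => 2*n+1) '' {n : ℕ | 0 < n ∧
      ∀ f ∈ [fpoly 66, fpoly 74], Prime (f.eval (n : ℤ))}).Infinite :=
    hS.image (fun a _ b _ h => by omega)
  refine himg.mono ?_
  rintro y ⟨n, ⟨hn0, hnp⟩, rfl⟩
  beta_reduce
  have hp1 : Prime ((fpoly 66).eval (n:ℤ)) := hnp _ (by simp)
  have hp2 : Prime ((fpoly 74).eval (n:ℤ)) := hnp _ (by simp)
  rw [fpoly_eval] at hp1 hp2
  have hA1 : inA (65 * (2*n+1) + 1) := by
    constructor
    · omega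
    · rw [Nat.prime_iff_prime_int]
      have he : (65 * (2*n+1) + 1 : ℕ) = 130*n+66 := by ring
      rw [he]
      exact_mod_cast hp1
  have hA2 : inA (65 * (2*n+1) + 9) := by
    constructor
    · omega
    · rw [Nat.prime_iff_prime_int]
      have he : (65 * (2*n+1) + 9 : ℕ) = 130*n+74 := by ring
      rw [he]
      exact_mod_cast hp2
  refine ⟨by omega, hA1, hA2, ?_, by omega, ?_⟩
  · intro m hlo hhi
    have hm : m = 130*n+67 ∨ m = 130*n+68 ∨ m = 130*n+69 ∨ m = 130*n+70 ∨
        m = 130*n+71 ∨ m = 130*n+72 ∨ m = 130*n+73 := by omega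
    rcases hm with rfl | rfl | rfl | rfl | rfl | rfl | rfl
    · exact comp_aux (d := 5) (k := 3380*n^2+3484*n+898) (by norm_num) (by omega) (by ring)
    · exact comp_aux (d := 5) (k := 3380*n^2+3536*n+925) (by norm_num) (by omega) (by ring)
    · exact comp_aux (d := 2) (k := 8450*n^2+8970*n+2381) (by norm_num) (by omega) (by ring)
    · exact comp_aux (d := 13) (k := 1300*n^2+1400*n+377) (by norm_num) (by omega) (by ring)
    · exact comp_aux (d := 2) (k := 8450*n^2+9230*n+2521) (by norm_num) (by omega) (by ring)
    · exact comp_aux (d := 5) (k := 3380*n^2+3744*n+1037) (by norm_num) (by omega) (by ring)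
    · exact comp_aux (d := 5) (k := 3380*n^2+3796*n+1066) (by norm_num) (by omega) (by ring)
  · rintro ⟨-, h⟩
    norm_num at h
end
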